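/- arXiv:1607.07035 — 2 statements merged into one kernel-verified Lean document; each statement's English description precedes it below -/
import Mathlib

section
/- Let k be a field, A a commutative k-algebra, and n ≥ 1. If χ is an invertible n × n matrix over A ⊗[k] A satisfying the cocycle condition ∂₂(χ) = ∂₁(χ) · ∂₃(χ) (the ring homomorphisms ∂ᵢ being applied entrywise and the product being matrix multiplication), then there exists an invertible n × n matrix α over A such that χ = δ₁(α) · δ₂(α)⁻¹. (This expresses that the Amitsur cohomology set H¹(A/k, GLₙ) is trivial for every algebra A over a field k.) -/
open TensorProduct

/-- `δ₁ : A → A ⊗[k] A`, `a ↦ 1 ⊗ a`. -/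
noncomputable def amitsurD1 (k A : Type*) [CommRing k] [CommRing A] [Algebra k A] :
    A →ₐ[k] A ⊗[k] A :=
  Algebra.TensorProduct.includeRight

/-- `δ₂ : A → A ⊗[k] A`, `a ↦ a ⊗ 1`. -/
noncomputable def amitsurD2 (k A : Type*) [CommRing k] [CommRing A] [Algebra k A] :
    A →ₐ[k] A ⊗[k] A :=
  Algebra.TensorProduct.includeLeft

/-- `∂₁ : A ⊗[k] A → A ⊗[k] A ⊗[k] A`, `a ⊗ b ↦ 1 ⊗ a ⊗ b`. -/
noncomputable def amitsurP1 (k A : Type*) [CommRing k] [CommRing A] [Algebra k A] :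
    A ⊗[k] A →ₐ[k] A ⊗[k] (A ⊗[k] A) :=
  Algebra.TensorProduct.includeRight

/-- `∂₂ : A ⊗[k] A → A ⊗[k] A ⊗[k] A`, `a ⊗ b ↦ a ⊗ 1 ⊗ b`. -/
noncomputable def amitsurP2 (k A : Type*) [CommRing k] [CommRing A] [Algebra k A] :
    A ⊗[k] A →ₐ[k] A ⊗[k] (A ⊗[k] A) :=
  Algebra.TensorProduct.map (AlgHom.id k A) Algebra.TensorProduct.includeRight

/-- `∂₃ : A ⊗[k] A → A ⊗[k] A ⊗[k] A`, `a ⊗ b ↦ a ⊗ b ⊗ 1`. -/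
noncomputable def amitsurP3 (k A : Type*) [CommRing k] [CommRing A] [Algebra k A] :
    A ⊗[k] A →ₐ[k] A ⊗[k] (A ⊗[k] A) :=
  Algebra.TensorProduct.map (AlgHom.id k A) Algebra.TensorProduct.includeLeft

section Helpers

variable (k A : Type*) [CommRing k] [CommRing A] [Algebra k A]

/-- multiplication `A ⊗ A → A`. -/
noncomputable def amitsurMu : A ⊗[k] A →ₐ[k] A := Algebra.TensorProduct.lmul' k

/-- contraction of the first two factors `A ⊗ (A ⊗ A) → A ⊗ A`, `a ⊗ b ⊗ c ↦ ab ⊗ c`. -/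
noncomputable def amitsurSig : A ⊗[k] (A ⊗[k] A) →ₐ[k] A ⊗[k] A :=
  Algebra.TensorProduct.lift (amitsurD2 k A) (AlgHom.id k _) fun _ _ => Commute.all _ _

/-- contraction `f ⊗ id : A ⊗ N → N` for a functional `f : A → k`. -/
noncomputable def amitsurCtrL (f : A →ₗ[k] k) (N : Type*) [AddCommMonoid N] [Module k N] :
    A ⊗[k] N →ₗ[k] N :=
  TensorProduct.lift ((LinearMap.lsmul k N).comp f)

/-- contraction `id ⊗ g : A ⊗ A → A` for a functional `g : A → k`. -/
noncomputable def amitsurCtrR (g : A →ₗ[k] k) : A ⊗[k] A →ₗ[k] A :=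
  TensorProduct.lift (((LinearMap.lsmul k A).comp g).flip)

variable {k A}

@[simp] lemma amitsurMu_tmul (a b : A) : amitsurMu k A (a ⊗ₜ b) = a * b :=
  Algebra.TensorProduct.lmul'_apply_tmul a b

@[simp] lemma amitsurSig_tmul (a : A) (s : A ⊗[k] A) :
    amitsurSig k A (a ⊗ₜ s) = (a ⊗ₜ 1) * s := by
  simp [amitsurSig, amitsurD2]

@[simp] lemma amitsurD1_apply (a : A) : amitsurD1 k A a = (1 : A) ⊗ₜ[k] a := rfl
@[simp] lemma amitsurD2_apply (a : A) : amitsurD2 k A a = a ⊗ₜ[k] (1 : A) := rfl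
@[simp] lemma amitsurP1_apply (t : A ⊗[k] A) : amitsurP1 k A t = (1 : A) ⊗ₜ[k] t := rfl
@[simp] lemma amitsurP2_tmul (a b : A) :
    amitsurP2 k A (a ⊗ₜ b) = a ⊗ₜ[k] ((1 : A) ⊗ₜ[k] b) := rfl
@[simp] lemma amitsurP3_tmul (a b : A) :
    amitsurP3 k A (a ⊗ₜ b) = a ⊗ₜ[k] (b ⊗ₜ[k] (1 : A)) := rfl

@[simp] lemma amitsurCtrL_tmul (f : A →ₗ[k] k) (N : Type*) [AddCommMonoid N] [Module k N]
    (a : A) (x : N) : amitsurCtrL k A f N (a ⊗ₜ x) = f a • x := by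
  simp [amitsurCtrL]

@[simp] lemma amitsurCtrR_tmul (g : A →ₗ[k] k) (a b : A) :
    amitsurCtrR k A g (a ⊗ₜ b) = g b • a := by
  simp [amitsurCtrR]

lemma amitsurSig_P2 (t : A ⊗[k] A) : amitsurSig k A (amitsurP2 k A t) = t := by
  induction t using TensorProduct.induction_on with
  | zero => simp
  | tmul a b => simp [Algebra.TensorProduct.tmul_mul_tmul]
  | add x y hx hy => simp [map_add, hx, hy]

lemma amitsurSig_P1 (t : A ⊗[k] A) : amitsurSig k A (amitsurP1 k A t) = t := by
  have : ((1 : A) ⊗ₜ[k] (1 : A)) = (1 : A ⊗[k] A) := rfl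
  simp [this]

lemma amitsurSig_P3 (t : A ⊗[k] A) :
    amitsurSig k A (amitsurP3 k A t) = (amitsurMu k A t) ⊗ₜ[k] (1 : A) := by
  induction t using TensorProduct.induction_on with
  | zero => simp
  | tmul a b => simp [Algebra.TensorProduct.tmul_mul_tmul]
  | add x y hx hy => simp [map_add, hx, hy, add_tmul]

lemma ctrL_P2 (f : A →ₗ[k] k) (t : A ⊗[k] A) :
    amitsurCtrL k A f (A ⊗[k] A) (amitsurP2 k A t)
      = (1 : A) ⊗ₜ[k] (amitsurCtrL k A f A t) := by
  induction t using TensorProduct.induction_on with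
  | zero => simp
  | tmul a b => simp [tmul_smul, smul_tmul]
  | add x y hx hy => simp [map_add, hx, hy, tmul_add]

lemma ctrL_P3 (f : A →ₗ[k] k) (t : A ⊗[k] A) :
    amitsurCtrL k A f (A ⊗[k] A) (amitsurP3 k A t)
      = (amitsurCtrL k A f A t) ⊗ₜ[k] (1 : A) := by
  induction t using TensorProduct.induction_on with
  | zero => simp
  | tmul a b => simp [smul_tmul']
  | add x y hx hy => simp [map_add, hx, hy, add_tmul]

lemma ctrL_P1_mul (f : A →ₗ[k] k) (s : A ⊗[k] A) (u : A ⊗[k] (A ⊗[k] A)) :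
    amitsurCtrL k A f (A ⊗[k] A) (amitsurP1 k A s * u)
      = s * amitsurCtrL k A f (A ⊗[k] A) u := by
  induction u using TensorProduct.induction_on with
  | zero => simp
  | tmul a t =>
      have : amitsurP1 k A s * (a ⊗ₜ t) = a ⊗ₜ (s * t) := by
        simp [Algebra.TensorProduct.tmul_mul_tmul]
      rw [this]
      simp [mul_smul_comm]
  | add x y hx hy => rw [mul_add, map_add, hx, hy, map_add, mul_add]

end Helpers
section WM

variable {k A : Type*} [CommRing k] [CommRing A] [Algebra k A] {n : ℕ}

/-- the space of "cocycle-compatible" vectors in `(A ⊗ A)ⁿ`. -/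
def amitsurWP (X : Matrix (Fin n) (Fin n) (A ⊗[k] A)) (w : Fin n → A ⊗[k] A) : Prop :=
  ∀ i, amitsurP2 k A (w i) = ∑ j, amitsurP1 k A (X i j) * amitsurP3 k A (w j)

/-- the descended submodule-defining predicate: `χ · δ₂(v) = δ₁(v)`. -/
def amitsurMP (X : Matrix (Fin n) (Fin n) (A ⊗[k] A)) (v : Fin n → A) : Prop :=
  ∀ i, ∑ j, X i j * (v j ⊗ₜ[k] (1 : A)) = (1 : A) ⊗ₜ[k] v i

variable {X : Matrix (Fin n) (Fin n) (A ⊗[k] A)}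

lemma amitsurWP_star {w : Fin n → A ⊗[k] A} (hw : amitsurWP X w) (i : Fin n) :
    w i = ∑ j, X i j * ((amitsurMu k A (w j)) ⊗ₜ[k] (1 : A)) := by
  have h := congrArg (amitsurSig k A) (hw i)
  rw [amitsurSig_P2, map_sum] at h
  refine h.trans (Finset.sum_congr rfl fun j _ => ?_)
  rw [map_mul, amitsurSig_P1, amitsurSig_P3]

lemma amitsurWP_smul {w : Fin n → A ⊗[k] A} (hw : amitsurWP X w) (a : A) :
    amitsurWP X (fun i => (a ⊗ₜ[k] (1 : A)) * w i) := by
  intro i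
  have hP : amitsurP2 k A (a ⊗ₜ[k] (1:A)) = amitsurP3 k A (a ⊗ₜ[k] (1:A)) := rfl
  calc amitsurP2 k A ((a ⊗ₜ[k] (1:A)) * w i)
      = amitsurP2 k A (a ⊗ₜ[k] (1:A)) * amitsurP2 k A (w i) := map_mul _ _ _
    _ = amitsurP2 k A (a ⊗ₜ[k] (1:A)) * ∑ j, amitsurP1 k A (X i j) * amitsurP3 k A (w j) := by
        rw [hw i]
    _ = ∑ j, amitsurP1 k A (X i j) * (amitsurP3 k A (a ⊗ₜ[k] (1:A)) * amitsurP3 k A (w j)) := by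
        rw [hP, Finset.mul_sum]
        exact Finset.sum_congr rfl fun j _ => by ring
    _ = ∑ j, amitsurP1 k A (X i j) * amitsurP3 k A ((a ⊗ₜ[k] (1:A)) * w j) := by
        simp [map_mul]

lemma amitsurWP_sum {ι : Type*} (s : Finset ι) (w : ι → Fin n → A ⊗[k] A)
    (hw : ∀ α ∈ s, amitsurWP X (w α)) :
    amitsurWP X (fun i => ∑ α ∈ s, w α i) := by
  intro i
  rw [map_sum]
  calc ∑ α ∈ s, amitsurP2 k A (w α i)
      = ∑ α ∈ s, ∑ j, amitsurP1 k A (X i j) * amitsurP3 k A (w α j) :=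
        Finset.sum_congr rfl fun α hα => hw α hα i
    _ = ∑ j, amitsurP1 k A (X i j) * amitsurP3 k A (∑ α ∈ s, w α j) := by
        rw [Finset.sum_comm]
        exact Finset.sum_congr rfl fun j _ => by rw [map_sum, Finset.mul_sum]

lemma amitsurWP_of_M {v : Fin n → A} (hv : amitsurMP X v) :
    amitsurWP X (fun i => (1 : A) ⊗ₜ[k] v i) := by
  intro i
  have h := congrArg (amitsurP1 k A) (hv i)
  rw [map_sum] at h
  have h2 : ∀ j, amitsurP1 k A (X i j * (v j ⊗ₜ[k] (1:A)))
      = amitsurP1 k A (X i j) * amitsurP3 k A ((1:A) ⊗ₜ[k] v j) := by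
    intro j
    rw [map_mul]
    congr 1
  rw [Finset.sum_congr rfl (fun j _ => h2 j)] at h
  exact h.symm

lemma amitsurWP_to_M (f : A →ₗ[k] k) {w : Fin n → A ⊗[k] A} (hw : amitsurWP X w) :
    amitsurMP X (fun i => amitsurCtrL k A f A (w i)) := by
  intro i
  have h := congrArg (amitsurCtrL k A f (A ⊗[k] A)) (hw i)
  rw [ctrL_P2, map_sum] at h
  rw [Finset.sum_congr rfl (fun j (_ : j ∈ Finset.univ) => (ctrL_P1_mul f (X i j) _))] at h
  rw [Finset.sum_congr rfl (fun j (_ : j ∈ Finset.univ) =>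
    (congrArg (X i j * ·) (ctrL_P3 f (w j))))] at h
  exact h.symm

end WM
section Coc

variable {k A : Type*} [CommRing k] [CommRing A] [Algebra k A] {n : ℕ}
variable {X : Matrix (Fin n) (Fin n) (A ⊗[k] A)}
variable (hc : ∀ i l, amitsurP2 k A (X i l)
    = ∑ j, amitsurP1 k A (X i j) * amitsurP3 k A (X j l))

include hc

/-- contracting the cocycle identity with `σ` yields `χ · δ₂(μ(χ)) = χ`. -/
lemma amitsur_chi_mul_eq :
    X * X.map (fun t => (amitsurMu k A t) ⊗ₜ[k] (1 : A)) = X := by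
  ext i l
  rw [Matrix.mul_apply]
  have h := congrArg (amitsurSig k A) (hc i l)
  rw [amitsurSig_P2, map_sum] at h
  have h2 : ∀ j, amitsurSig k A (amitsurP1 k A (X i j) * amitsurP3 k A (X j l))
      = X i j * (X.map (fun t => (amitsurMu k A t) ⊗ₜ[k] (1:A))) j l := by
    intro j
    rw [map_mul, amitsurSig_P1, amitsurSig_P3, Matrix.map_apply]
  rw [Finset.sum_congr rfl (fun j _ => h2 j)] at h
  exact h.symm

/-- `χ · δ₂(v)` always lies in `W`. -/
lemma amitsurWP_chi_d2 (v : Fin n → A) :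
    amitsurWP X (fun i => ∑ j, X i j * (v j ⊗ₜ[k] (1 : A))) := by
  intro i
  have hP : ∀ a : A, amitsurP2 k A (a ⊗ₜ[k] (1:A)) = amitsurP3 k A (a ⊗ₜ[k] (1:A)) :=
    fun a => rfl
  calc amitsurP2 k A (∑ j, X i j * (v j ⊗ₜ[k] (1:A)))
      = ∑ j, amitsurP2 k A (X i j) * amitsurP2 k A (v j ⊗ₜ[k] (1:A)) := by
        rw [map_sum]; exact Finset.sum_congr rfl fun j _ => map_mul _ _ _
    _ = ∑ j, (∑ l, amitsurP1 k A (X i l) * amitsurP3 k A (X l j))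
          * amitsurP3 k A (v j ⊗ₜ[k] (1:A)) := by
        exact Finset.sum_congr rfl fun j _ => by rw [hc i j, hP]
    _ = ∑ l, amitsurP1 k A (X i l)
          * amitsurP3 k A (∑ j, X l j * (v j ⊗ₜ[k] (1:A))) := by
        simp only [Finset.sum_mul]
        rw [Finset.sum_comm]
        exact Finset.sum_congr rfl fun l _ => by
          rw [map_sum, Finset.mul_sum]
          exact Finset.sum_congr rfl fun j _ => by rw [map_mul]; ring

end Coc
section Phi

variable {k A : Type*} [CommRing k] [CommRing A] [Algebra k A] {n : ℕ}

/-- the canonical map `A ⊗ Aⁿ → (A ⊗ A)ⁿ`. -/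
noncomputable def amitsurPhi (k A : Type*) [CommRing k] [CommRing A] [Algebra k A] (n : ℕ) :
    A ⊗[k] (Fin n → A) →ₗ[k] (Fin n → A ⊗[k] A) :=
  TensorProduct.lift (LinearMap.mk₂ k (fun a v => fun i => a ⊗ₜ[k] v i)
    (fun a a' v => by funext i; exact add_tmul a a' (v i))
    (fun c a v => by funext i; exact smul_tmul' c a (v i))
    (fun a v v' => by funext i; exact tmul_add a (v i) (v' i))
    (fun c a v => by
      funext i
      show a ⊗ₜ[k] (c • v) i = c • (a ⊗ₜ[k] v i)
      rw [Pi.smul_apply, ← smul_tmul, smul_tmul']))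

@[simp] lemma amitsurPhi_tmul (a : A) (v : Fin n → A) :
    amitsurPhi k A n (a ⊗ₜ v) = fun i => a ⊗ₜ[k] v i := rfl

lemma amitsurPhi_surjective : Function.Surjective (amitsurPhi k A n) := by
  intro w
  have hmem : ∀ i, Pi.single i (w i) ∈ LinearMap.range (amitsurPhi k A n) := by
    intro i
    induction w i using TensorProduct.induction_on with
    | zero => rw [Pi.single_zero]; exact Submodule.zero_mem _
    | tmul a b =>
        refine ⟨a ⊗ₜ Pi.single i b, ?_⟩
        rw [amitsurPhi_tmul]
        funext j
        by_cases h : j = i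
        · subst h; simp
        · simp [Pi.single_apply, h, tmul_zero]
    | add x y hx hy => rw [Pi.single_add]; exact Submodule.add_mem _ hx hy
  have : w ∈ LinearMap.range (amitsurPhi k A n) := by
    rw [← Finset.univ_sum_single w]
    exact Submodule.sum_mem _ fun i _ => hmem i
  exact this

/-- every vector in `(A ⊗ A)ⁿ` is a finite sum of elementary vectors. -/
lemma amitsur_exists_rep (w : Fin n → A ⊗[k] A) :
    ∃ s : Finset (A × (Fin n → A)), ∀ i, w i = ∑ p ∈ s, p.1 ⊗ₜ[k] p.2 i := by
  obtain ⟨x, hx⟩ := amitsurPhi_surjective w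
  obtain ⟨s, hs⟩ := TensorProduct.exists_finset x
  refine ⟨s, fun i => ?_⟩
  rw [← hx, hs, map_sum]
  rw [Finset.sum_apply]
  rfl

end Phi
section Msub

variable {k A : Type*} [CommRing k] [CommRing A] [Algebra k A] {n : ℕ}

/-- the descended submodule `M = {v : χ · δ₂(v) = δ₁(v)}`. -/
noncomputable def amitsurMsub (X : Matrix (Fin n) (Fin n) (A ⊗[k] A)) :
    Submodule k (Fin n → A) where
  carrier := {v | amitsurMP X v}
  add_mem' := by
    intro v w hv hw i
    have : ∀ j, ((v + w) j) ⊗ₜ[k] (1:A) = v j ⊗ₜ[k] (1:A) + w j ⊗ₜ[k] (1:A) := by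
      intro j; rw [Pi.add_apply, add_tmul]
    calc ∑ j, X i j * (((v + w) j) ⊗ₜ[k] (1:A))
        = ∑ j, (X i j * (v j ⊗ₜ[k] (1:A)) + X i j * (w j ⊗ₜ[k] (1:A))) := by
          exact Finset.sum_congr rfl fun j _ => by rw [this j, mul_add]
      _ = (1:A) ⊗ₜ[k] v i + (1:A) ⊗ₜ[k] w i := by
          rw [Finset.sum_add_distrib, hv i, hw i]
      _ = (1:A) ⊗ₜ[k] ((v + w) i) := by rw [Pi.add_apply, tmul_add]
  zero_mem' := by
    intro i
    simp [amitsurMP]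
  smul_mem' := by
    intro c v hv i
    calc ∑ j, X i j * (((c • v) j) ⊗ₜ[k] (1:A))
        = c • ∑ j, X i j * (v j ⊗ₜ[k] (1:A)) := by
          rw [Finset.smul_sum]
          exact Finset.sum_congr rfl fun j _ => by
            rw [Pi.smul_apply, ← smul_tmul', mul_smul_comm]
      _ = c • ((1:A) ⊗ₜ[k] v i) := by rw [hv i]
      _ = (1:A) ⊗ₜ[k] ((c • v) i) := by rw [Pi.smul_apply, tmul_smul]

@[simp] lemma amitsurMsub_mem (X : Matrix (Fin n) (Fin n) (A ⊗[k] A)) (v : Fin n → A) :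
    v ∈ amitsurMsub X ↔ amitsurMP X v := Iff.rfl

end Msub

section Span

variable {k A : Type*} [Field k] [CommRing A] [Algebra k A] {n : ℕ}
variable {X : Matrix (Fin n) (Fin n) (A ⊗[k] A)}

/-- `μ` maps `W` into the `A`-span of `M`. -/
lemma amitsur_mu_mem_span {w : Fin n → A ⊗[k] A} (hw : amitsurWP X w) :
    (fun i => amitsurMu k A (w i))
      ∈ Submodule.span A ((amitsurMsub X : Set (Fin n → A))) := by
  classical
  obtain ⟨s, hs⟩ := amitsur_exists_rep w
  set E := Submodule.span k ((s.image Prod.fst : Finset A) : Set A) with hE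
  have hfd : FiniteDimensional k E := FiniteDimensional.span_of_finite k (Finset.finite_toSet _)
  set d := Module.finrank k E with hd
  set bE := Module.finBasis k E with hbE
  have hext : ∀ t : Fin d, ∃ g : A →ₗ[k] k, g.comp E.subtype = bE.coord t :=
    fun t => LinearMap.exists_extend _
  choose ft hft using hext
  have hm : ∀ t, amitsurMP X (fun i => amitsurCtrL k A (ft t) A (w i)) :=
    fun t => amitsurWP_to_M (ft t) hw
  have hrepr : ∀ p ∈ s, ∑ t, (ft t p.1) • (bE t : A) = p.1 := by
    intro p hp
    have hp1 : p.1 ∈ E := Submodule.subset_span (by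
      exact Finset.mem_coe.2 (Finset.mem_image_of_mem Prod.fst hp))
    have hco : ∀ t, ft t p.1 = bE.repr ⟨p.1, hp1⟩ t := by
      intro t
      have := congrArg (fun (g : E →ₗ[k] k) => g ⟨p.1, hp1⟩) (hft t)
      simpa [Module.Basis.coord_apply] using this
    calc ∑ t, (ft t p.1) • (bE t : A)
        = ∑ t, (bE.repr ⟨p.1, hp1⟩ t) • (bE t : A) := by
          exact Finset.sum_congr rfl fun t _ => by rw [hco t]
      _ = (E.subtype (∑ t, (bE.repr ⟨p.1, hp1⟩ t) • bE t) : A) := by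
          rw [map_sum]; exact Finset.sum_congr rfl fun t _ => by simp
      _ = p.1 := by rw [bE.sum_repr ⟨p.1, hp1⟩]; rfl
  have key : (fun i => amitsurMu k A (w i))
      = ∑ t, (bE t : A) • (fun i => amitsurCtrL k A (ft t) A (w i)) := by
    funext i
    rw [Finset.sum_apply]
    have hctr : ∀ t, ((bE t : A) • (fun i => amitsurCtrL k A (ft t) A (w i))) i
        = ∑ p ∈ s, (ft t p.1) • ((bE t : A) * p.2 i) := by
      intro t
      rw [Pi.smul_apply, smul_eq_mul, hs i, map_sum, Finset.mul_sum]
      exact Finset.sum_congr rfl fun p _ => by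
        rw [amitsurCtrL_tmul, mul_smul_comm]
    calc amitsurMu k A (w i)
        = ∑ p ∈ s, p.1 * p.2 i := by
          rw [hs i, map_sum]
          exact Finset.sum_congr rfl fun p _ => amitsurMu_tmul _ _
      _ = ∑ p ∈ s, (∑ t, (ft t p.1) • (bE t : A)) * p.2 i := by
          exact Finset.sum_congr rfl fun p hp => by rw [hrepr p hp]
      _ = ∑ p ∈ s, ∑ t, (ft t p.1) • ((bE t : A) * p.2 i) := by
          exact Finset.sum_congr rfl fun p _ => by
            rw [Finset.sum_mul]
            exact Finset.sum_congr rfl fun t _ => smul_mul_assoc _ _ _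
      _ = ∑ t, ((bE t : A) • (fun i => amitsurCtrL k A (ft t) A (w i))) i := by
          rw [Finset.sum_comm]
          exact Finset.sum_congr rfl fun t _ => (hctr t).symm
  rw [key]
  exact Submodule.sum_mem _ fun t _ =>
    Submodule.smul_mem _ _ (Submodule.subset_span (hm t))

end Span
/-- `H¹(A/k, GLₙ)` is trivial for every algebra `A` over a field `k`:
every matrix 1-cocycle `χ ∈ GLₙ(A ⊗[k] A)` is of the form `δ₁(α)·δ₂(α)⁻¹`. -/
theorem amitsur_h1_GLn_trivial (k A : Type*) [Field k] [CommRing A] [Algebra k A]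
    (n : ℕ) (hn : 1 ≤ n)
    (χ : (Matrix (Fin n) (Fin n) (A ⊗[k] A))ˣ)
    (hcoc : χ.val.map (amitsurP2 k A) =
      χ.val.map (amitsurP1 k A) * χ.val.map (amitsurP3 k A)) :
    ∃ α : (Matrix (Fin n) (Fin n) A)ˣ,
      χ = Units.map ((amitsurD1 k A).toRingHom.mapMatrix.toMonoidHom) α *
          (Units.map ((amitsurD2 k A).toRingHom.mapMatrix.toMonoidHom) α)⁻¹ := by
  classical
  by_cases hA : Nontrivial A
  swap
  · have hsub : Subsingleton A := not_nontrivial_iff_subsingleton.mp hA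
    have h10 : (1 : A ⊗[k] A) = 0 := by
      have h : (1 : A) = 0 := Subsingleton.elim _ _
      calc (1 : A ⊗[k] A) = (1:A) ⊗ₜ[k] (1:A) := rfl
        _ = 0 := by rw [h, zero_tmul]
    have : Subsingleton (A ⊗[k] A) := subsingleton_of_zero_eq_one h10.symm
    exact ⟨1, Units.ext (Subsingleton.elim _ _)⟩
  haveI := hA
  set X := χ.val with hX
  have hc : ∀ i l, amitsurP2 k A (X i l)
      = ∑ j, amitsurP1 k A (X i j) * amitsurP3 k A (X j l) := by
    intro i l
    have h := congrFun (congrFun hcoc i) l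
    rw [Matrix.map_apply] at h
    rw [h, Matrix.mul_apply]
    exact Finset.sum_congr rfl fun j _ => by rw [Matrix.map_apply, Matrix.map_apply]
  -- μ(χ) = 1
  set Y := X.map (fun t => (amitsurMu k A t) ⊗ₜ[k] (1:A)) with hYdef
  have hY1 : Y = 1 := by
    have h := amitsur_chi_mul_eq hc
    calc Y = (↑χ⁻¹ * X) * Y := by rw [hX, χ.inv_mul, one_mul]
      _ = ↑χ⁻¹ * (X * Y) := by rw [mul_assoc]
      _ = ↑χ⁻¹ * X := by rw [← hYdef] at h; rw [h]
      _ = 1 := by rw [hX, χ.inv_mul]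
  have hmu1 : ∀ i l, amitsurMu k A (X i l) = (1 : Matrix (Fin n) (Fin n) A) i l := by
    intro i l
    have h2 := congrFun (congrFun hY1 i) l
    rw [hYdef, Matrix.map_apply] at h2
    have h3 := congrArg (amitsurMu k A) h2
    rw [amitsurMu_tmul, mul_one] at h3
    rw [h3]
    by_cases hil : i = l
    · subst hil; rw [Matrix.one_apply_eq, Matrix.one_apply_eq, map_one]
    · rw [Matrix.one_apply_ne hil, Matrix.one_apply_ne hil, map_zero]
  -- spanning
  have hspan : ∀ v : Fin n → A,
      v ∈ Submodule.span A ((amitsurMsub X : Set (Fin n → A))) := by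
    intro v
    have hwW : amitsurWP X (fun i => ∑ j, X i j * (v j ⊗ₜ[k] (1:A))) :=
      amitsurWP_chi_d2 hc v
    have hmueq : (fun i => amitsurMu k A (∑ j, X i j * (v j ⊗ₜ[k] (1:A)))) = v := by
      funext i
      rw [map_sum]
      calc ∑ j, amitsurMu k A (X i j * (v j ⊗ₜ[k] (1:A)))
          = ∑ j, (1 : Matrix (Fin n) (Fin n) A) i j * v j := by
            refine Finset.sum_congr rfl fun j _ => ?_
            rw [map_mul, amitsurMu_tmul, mul_one, hmu1 i j]
        _ = v i := by simp [Matrix.one_apply]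
    have hmem := amitsur_mu_mem_span hwW
    rwa [hmueq] at hmem
  -- the k-basis of M
  set b := Module.Basis.ofVectorSpace k (amitsurMsub X) with hb
  set fam : Module.Basis.ofVectorSpaceIndex k (amitsurMsub X) → (Fin n → A) :=
      fun α => ((b α : amitsurMsub X) : Fin n → A) with hfam
  have hfamM : ∀ α, amitsurMP X (fam α) := fun α => (b α).2
  have hindk : LinearIndependent k fam :=
    b.linearIndependent.map' (amitsurMsub X).subtype (Submodule.ker_subtype _)
  -- A-linear independence
  have hindA : LinearIndependent A fam := by
    rw [linearIndependent_iff']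
    intro s g hsum β hβ
    have hW1 : ∀ α, amitsurWP X (fun i => g α ⊗ₜ[k] fam α i) := by
      intro α
      have h1 := amitsurWP_smul (amitsurWP_of_M (hfamM α)) (g α)
      have h2 : (fun i => (g α ⊗ₜ[k] (1:A)) * ((1:A) ⊗ₜ[k] fam α i))
          = fun i => g α ⊗ₜ[k] fam α i := by
        funext i
        rw [Algebra.TensorProduct.tmul_mul_tmul, mul_one, one_mul]
      rwa [h2] at h1
    have hW : amitsurWP X (fun i => ∑ α ∈ s, g α ⊗ₜ[k] fam α i) :=
      amitsurWP_sum s (fun α => fun i => g α ⊗ₜ[k] fam α i) (fun α _ => hW1 α)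
    have hmu0 : ∀ i, amitsurMu k A (∑ α ∈ s, g α ⊗ₜ[k] fam α i) = 0 := by
      intro i
      rw [map_sum]
      have h4 := congrFun hsum i
      rw [Finset.sum_apply] at h4
      calc ∑ α ∈ s, amitsurMu k A (g α ⊗ₜ[k] fam α i)
          = ∑ α ∈ s, (g α • fam α) i := by
            exact Finset.sum_congr rfl fun α _ => by
              rw [amitsurMu_tmul, Pi.smul_apply, smul_eq_mul]
        _ = 0 := h4
    have hw0 : ∀ i, (∑ α ∈ s, g α ⊗ₜ[k] fam α i) = 0 := by
      intro i
      have h5 := amitsurWP_star hW i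
      rw [h5]
      have : ∀ j, X i j * ((amitsurMu k A (∑ α ∈ s, g α ⊗ₜ[k] fam α j)) ⊗ₜ[k] (1:A))
          = 0 := by
        intro j
        rw [hmu0 j, zero_tmul, mul_zero]
      rw [Finset.sum_congr rfl (fun j _ => this j), Finset.sum_const_zero]
    -- extraction of the coefficient g β
    set Bspan := Module.Basis.span hindk with hBspan
    obtain ⟨eβ, heβ⟩ := LinearMap.exists_extend (Bspan.coord β)
    have heβfam : ∀ α, eβ (fam α) = if α = β then (1:k) else 0 := by
      intro α
      have h1 : fam α = ((Bspan α : Submodule.span k (Set.range fam)) : Fin n → A) :=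
        congrArg Subtype.val (Module.Basis.span_apply hindk α).symm
      have h2 := congrArg
        (fun (g : (Submodule.span k (Set.range fam)) →ₗ[k] k) => g (Bspan α)) heβ
      simp only [LinearMap.comp_apply, Submodule.subtype_apply] at h2
      rw [h1, h2, Module.Basis.coord_apply, Module.Basis.repr_self, Finsupp.single_apply]
    have hcontr : ∀ i, ∑ α ∈ s, (eβ (Pi.single i (fam α i))) • g α = 0 := by
      intro i
      have h0 := hw0 i
      have h6 := congrArg
        (amitsurCtrR k A (eβ.comp (LinearMap.single k (fun _ : Fin n => A) i))) h0
      rw [map_sum, map_zero] at h6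
      rw [← h6]
      exact Finset.sum_congr rfl fun α _ => by
        rw [amitsurCtrR_tmul, LinearMap.comp_apply]
        rfl
    have hfinal : ∑ α ∈ s, (∑ i, eβ (Pi.single i (fam α i))) • g α = 0 := by
      have h7 : ∑ i, ∑ α ∈ s, (eβ (Pi.single i (fam α i))) • g α = 0 := by
        rw [Finset.sum_congr rfl (fun i _ => hcontr i), Finset.sum_const_zero]
      rw [Finset.sum_comm] at h7
      rw [← h7]
      exact Finset.sum_congr rfl fun α _ => by rw [Finset.sum_smul]
    have h8 : ∀ α ∈ s, (∑ i, eβ (Pi.single i (fam α i))) • g α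
        = (if α = β then (1:k) else 0) • g α := by
      intro α _
      rw [← map_sum, Finset.univ_sum_single, heβfam α]
    rw [Finset.sum_congr rfl h8] at hfinal
    have h9 : ∑ α ∈ s, (if α = β then (1:k) else 0) • g α = g β := by
      rw [Finset.sum_congr rfl (fun α _ => by rw [ite_smul, one_smul, zero_smul])]
      rw [Finset.sum_ite_eq' s β g]
      simp [hβ]
    rw [h9] at hfinal
    exact hfinal
  -- fam spans over A
  have hspan_top : ⊤ ≤ Submodule.span A (Set.range fam) := by
    intro v _
    have h1 : (amitsurMsub X : Set (Fin n → A))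
        ⊆ (Submodule.span A (Set.range fam) : Set (Fin n → A)) := by
      intro x hx
      have h2 : x ∈ Submodule.span k (Set.range fam) := by
        have h3 : Submodule.span k (Set.range fam)
            = Submodule.map (amitsurMsub X).subtype (Submodule.span k (Set.range b)) := by
          rw [Submodule.map_span]
          congr 1
          rw [← Set.range_comp]
          rfl
        rw [h3, b.span_eq, Submodule.map_top, Submodule.range_subtype]
        exact hx
      exact Submodule.span_le_restrictScalars k A (Set.range fam) h2
    exact Submodule.span_le.2 h1 (hspan v)
  set c := Module.Basis.mk hindA hspan_top with hcdef
  set e := c.indexEquiv (Pi.basisFun A (Fin n)) with hedef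
  set c' := c.reindex e with hc'def
  set αm := (Pi.basisFun A (Fin n)).toMatrix c' with hαm
  letI hinv : Invertible αm := (Pi.basisFun A (Fin n)).invertibleToMatrix c'
  have hcol : ∀ j, amitsurMP X (fun i => αm i j) := by
    intro j
    have h1 : (fun i => αm i j) = fam (e.symm j) := by
      funext i
      rw [hαm, Module.Basis.toMatrix_apply, Pi.basisFun_repr, hc'def, Module.Basis.reindex_apply,
        hcdef, Module.Basis.mk_apply]
    rw [h1]
    exact hfamM _
  refine ⟨unitOfInvertible αm, ?_⟩
  rw [eq_mul_inv_iff_mul_eq]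
  apply Units.ext
  rw [Units.val_mul, Units.coe_map, Units.coe_map]
  show X * (amitsurD2 k A).toRingHom.mapMatrix (unitOfInvertible αm).val
      = (amitsurD1 k A).toRingHom.mapMatrix (unitOfInvertible αm).val
  rw [val_unitOfInvertible, RingHom.mapMatrix_apply, RingHom.mapMatrix_apply]
  ext i l
  rw [Matrix.mul_apply]
  simp only [Matrix.map_apply]
  calc ∑ j, X i j * (amitsurD2 k A).toRingHom (αm j l)
      = ∑ j, X i j * ((αm j l) ⊗ₜ[k] (1:A)) := by
        exact Finset.sum_congr rfl fun j _ => by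
          rw [AlgHom.toRingHom_eq_coe, RingHom.coe_coe, amitsurD2_apply]
    _ = (1:A) ⊗ₜ[k] (αm i l) := hcol l i
    _ = (amitsurD1 k A).toRingHom (αm i l) := by
        rw [AlgHom.toRingHom_eq_coe, RingHom.coe_coe, amitsurD1_apply]
end

section
/- Let k be a σ-field, A a nonzero k-σ-algebra, n ≥ 1, and d ≥ 1. Suppose χ is an invertible n × n matrix over A ⊗[k] A satisfying the cocycle condition ∂₂(χ) = ∂₁(χ) · ∂₃(χ) (the homomorphisms ∂ᵢ applied entrywise) and τ^d(χ) = χ (τ^d applied entrywise). Then there exist an invertible n × n matrix α over A and an invertible n × n matrix a over k such that χ = δ₁(α) · δ₂(α)⁻¹ and σ_A^d(α) = α · (algebraMap k A applied entrywise to a). (This is the cocycle-level classification of torsors for the σ-algebraic group G = {g ∈ GLₙ | σ^d(g) = g}: every G-torsor is isomorphic to Y = {g ∈ GLₙ | σ^d(g) = g a} for some a ∈ GLₙ(k).) -/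
open TensorProduct Matrix

section AmitsurHelpers

variable {k A : Type*} [CommRing k] [CommRing A] [Algebra k A]

/-- `a ⊗ b ↦ f a • b`. -/
noncomputable def amg (f : A →ₗ[k] k) : A ⊗[k] A →ₗ[k] A :=
  TensorProduct.lift ((LinearMap.lsmul k A).comp f)

@[simp] lemma amg_tmul (f : A →ₗ[k] k) (a b : A) : amg f (a ⊗ₜ[k] b) = f a • b := rfl

/-- `a ⊗ b ↦ f b • a`. -/
noncomputable def amg' (f : A →ₗ[k] k) : A ⊗[k] A →ₗ[k] A :=
  TensorProduct.lift ((LinearMap.lsmul k A).comp f).flip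

@[simp] lemma amg'_tmul (f : A →ₗ[k] k) (a b : A) : amg' f (a ⊗ₜ[k] b) = f b • a := rfl

/-- `a ⊗ x ↦ f a • x` on `A ⊗ (A ⊗ A)`. -/
noncomputable def amG (f : A →ₗ[k] k) : A ⊗[k] (A ⊗[k] A) →ₗ[k] A ⊗[k] A :=
  TensorProduct.lift ((LinearMap.lsmul k (A ⊗[k] A)).comp f)

@[simp] lemma amG_tmul (f : A →ₗ[k] k) (a : A) (x : A ⊗[k] A) :
    amG f (a ⊗ₜ[k] x) = f a • x := rfl

lemma amG_one_tmul_mul (f : A →ₗ[k] k) (x : A ⊗[k] A) (y : A ⊗[k] (A ⊗[k] A)) :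
    amG f ((1 ⊗ₜ[k] x) * y) = x * amG f y := by
  induction y using TensorProduct.induction_on with
  | zero => simp
  | tmul a w =>
      simp [Algebra.TensorProduct.tmul_mul_tmul, mul_smul_comm]
  | add y₁ y₂ h1 h2 => simp [mul_add, h1, h2]

lemma amG_P2 (f : A →ₗ[k] k) (z : A ⊗[k] A) :
    amG f (amitsurP2 k A z) = amitsurD1 k A (amg f z) := by
  induction z using TensorProduct.induction_on with
  | zero => simp
  | tmul a b => simp [amitsurP2, amitsurD1, TensorProduct.tmul_smul]
  | add z₁ z₂ h1 h2 => simp [map_add, h1, h2]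

lemma amG_P3 (f : A →ₗ[k] k) (z : A ⊗[k] A) :
    amG f (amitsurP3 k A z) = amitsurD2 k A (amg f z) := by
  induction z using TensorProduct.induction_on with
  | zero => simp
  | tmul a b => simp [amitsurP3, amitsurD2, TensorProduct.smul_tmul']
  | add z₁ z₂ h1 h2 => simp [map_add, h1, h2]

lemma amg_mul_tmul (f : A →ₗ[k] k) (a b : A) (z : A ⊗[k] A) :
    amg f (z * (a ⊗ₜ[k] b)) = b • amg (f.comp (LinearMap.mulLeft k a)) z := by
  induction z using TensorProduct.induction_on with
  | zero => simp
  | tmul x y =>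
      simp only [Algebra.TensorProduct.tmul_mul_tmul, amg_tmul, LinearMap.comp_apply,
        LinearMap.mulLeft_apply, smul_eq_mul]
      rw [mul_comm a x, mul_comm y b, mul_smul_comm]
  | add z₁ z₂ h1 h2 => simp [add_mul, h1, h2, smul_add, mul_add]

end AmitsurHelpers

set_option maxHeartbeats 1000000 in
/-- Cocycle-level classification of torsors for the σ-algebraic group
`G = {g ∈ GLₙ | σᵈ(g) = g}`: every cocycle `χ` with `τᵈ(χ) = χ` is of the form
`δ₁(α)·δ₂(α)⁻¹` with `σᵈ(α) = α a` for some `a ∈ GLₙ(k)`. -/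
theorem torsors_sigma_fixed_group (k A : Type*) [Field k] [CommRing A] [Algebra k A]
    [Nontrivial A]
    (σk : k →+* k) (σA : A →+* A)
    (hσ : ∀ c : k, σA (algebraMap k A c) = algebraMap k A (σk c))
    (τ : A ⊗[k] A →+* A ⊗[k] A)
    (hτ : ∀ a b : A, τ (a ⊗ₜ[k] b) = σA a ⊗ₜ[k] σA b)
    (n d : ℕ) (hn : 1 ≤ n) (hd : 1 ≤ d)
    (χ : (Matrix (Fin n) (Fin n) (A ⊗[k] A))ˣ)
    (hcoc : χ.val.map (amitsurP2 k A) =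
      χ.val.map (amitsurP1 k A) * χ.val.map (amitsurP3 k A))
    (hτχ : χ.val.map (τ ^ d) = χ.val) :
    ∃ (α : (Matrix (Fin n) (Fin n) A)ˣ) (a : (Matrix (Fin n) (Fin n) k)ˣ),
      χ = Units.map ((amitsurD1 k A).toRingHom.mapMatrix.toMonoidHom) α *
          (Units.map ((amitsurD2 k A).toRingHom.mapMatrix.toMonoidHom) α)⁻¹ ∧
      α.val.map (σA ^ d) = α.val * (a.val.map (algebraMap k A)) := by
  classical
  -- a k-linear functional `f₀ : A → k` retracting `algebraMap`
  have hinj : Function.Injective (Algebra.linearMap k A) := by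
    intro x y h
    exact (algebraMap k A).injective h
  obtain ⟨q, hq⟩ := Submodule.exists_isCompl (LinearMap.range (Algebra.linearMap k A))
  set e : k ≃ₗ[k] LinearMap.range (Algebra.linearMap k A) :=
    LinearEquiv.ofInjective _ hinj with he
  set f₀ : A →ₗ[k] k :=
    e.symm.toLinearMap ∘ₗ
      (LinearMap.range (Algebra.linearMap k A)).linearProjOfIsCompl q hq with hf₀def
  have hf₀ : ∀ c : k, f₀ (algebraMap k A c) = c := by
    intro c
    have h1 : ((e c : A)) = algebraMap k A c := by
      simp [he, LinearEquiv.ofInjective_apply]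
    have h2 : (LinearMap.range (Algebra.linearMap k A)).linearProjOfIsCompl q hq
        (algebraMap k A c) = e c := by
      rw [← h1]
      exact Submodule.linearProjOfIsCompl_apply_left hq (e c)
    simp [hf₀def, h2]
  have hf₀1 : f₀ 1 = 1 := by simpa using hf₀ 1
  -- the equalizer is k
  have heq : ∀ x : A, (1 : A) ⊗ₜ[k] x = x ⊗ₜ[k] (1 : A) → x = algebraMap k A (f₀ x) := by
    intro x hx
    have := congrArg (amg (k := k) f₀) hx
    simpa [hf₀1, Algebra.algebraMap_eq_smul_one] using this
  -- the subspace W of trivializing columns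
  set δ1 := amitsurD1 k A with hδ1
  set δ2 := amitsurD2 k A with hδ2
  set W : Submodule k (Fin n → A) :=
    { carrier := {v | ∀ i, ∑ l, χ.val i l * δ2 (v l) = δ1 (v i)}
      add_mem' := by
        intro v w hv hw i
        simp only [Pi.add_apply, map_add, mul_add, Finset.sum_add_distrib, hv i, hw i]
      zero_mem' := by simp
      smul_mem' := by
        intro c v hv i
        have h : ∑ l, χ.val i l * δ2 (v l) = δ1 (v i) := hv i
        calc ∑ l, χ.val i l * δ2 ((c • v) l)
            = c • ∑ l, χ.val i l * δ2 (v l) := by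
              rw [Finset.smul_sum]
              refine Finset.sum_congr rfl fun l _ => ?_
              rw [Pi.smul_apply, _root_.map_smul, mul_smul_comm]
          _ = δ1 ((c • v) i) := by rw [h, Pi.smul_apply, _root_.map_smul] } with hW
  have memW : ∀ v : Fin n → A, v ∈ W ↔ ∀ i, ∑ l, χ.val i l * δ2 (v l) = δ1 (v i) := by
    intro v; rfl
  -- columns of `χ.map (amg f)` are in `W`
  have col_mem : ∀ (f : A →ₗ[k] k) (j : Fin n), (fun i => amg f (χ.val i j)) ∈ W := by
    intro f j
    rw [memW]
    intro i
    calc ∑ l, χ.val i l * δ2 (amg f (χ.val l j))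
        = ∑ l, amG f ((1 ⊗ₜ[k] χ.val i l) * amitsurP3 k A (χ.val l j)) := by
          refine Finset.sum_congr rfl fun l _ => ?_
          rw [amG_one_tmul_mul, amG_P3, hδ2]
      _ = amG f (∑ l, (χ.val.map (amitsurP1 k A)) i l * (χ.val.map (amitsurP3 k A)) l j) := by
          rw [map_sum]
          refine Finset.sum_congr rfl fun l _ => ?_
          simp [amitsurP1, Matrix.map_apply]
      _ = amG f ((χ.val.map (amitsurP2 k A)) i j) := by
          rw [← Matrix.mul_apply, ← hcoc]
      _ = δ1 (amg f (χ.val i j)) := by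
          rw [Matrix.map_apply, amG_P2, hδ1]
  -- span over A
  set S : Submodule A (Fin n → A) := Submodule.span A (W : Set (Fin n → A)) with hS
  have key : ∀ (l : Fin n) (z : A ⊗[k] A) (f : A →ₗ[k] k),
      (fun i => amg f (χ.val.mulVec (Pi.single l z) i)) ∈ S := by
    intro l z
    induction z using TensorProduct.induction_on with
    | zero =>
        intro f
        have : (fun i => amg f (χ.val.mulVec (Pi.single l (0 : A ⊗[k] A)) i)) = 0 := by
          funext i
          simp
        rw [this]; exact S.zero_mem
    | tmul a b =>
        intro f
        have h1 : (fun i => amg f (χ.val.mulVec (Pi.single l (a ⊗ₜ[k] b)) i))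
            = b • fun i => amg (f.comp (LinearMap.mulLeft k a)) (χ.val i l) := by
          funext i
          rw [Matrix.mulVec_single]
          simp only [Pi.smul_apply, smul_eq_mul, op_smul_eq_mul, Matrix.col_apply]
          rw [amg_mul_tmul]
          simp [smul_eq_mul]
        rw [h1]
        exact S.smul_mem b (Submodule.subset_span (col_mem _ l))
    | add z₁ z₂ h1 h2 =>
        intro f
        have hsum : (fun i => amg f (χ.val.mulVec (Pi.single l (z₁ + z₂)) i))
            = (fun i => amg f (χ.val.mulVec (Pi.single l z₁) i))
              + fun i => amg f (χ.val.mulVec (Pi.single l z₂) i) := by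
          funext i
          rw [Pi.single_add, Matrix.mulVec_add]
          simp [mul_comm]
        rw [hsum]
        exact S.add_mem (h1 f) (h2 f)
  have master : ∀ (w : Fin n → A ⊗[k] A) (f : A →ₗ[k] k),
      (fun i => amg f (χ.val.mulVec w i)) ∈ S := by
    intro w f
    have hw : χ.val.mulVec w = ∑ l, χ.val.mulVec (Pi.single l (w l)) := by
      conv_lhs => rw [← Finset.univ_sum_single w]
      rw [← Matrix.mulVecLin_apply, map_sum]
      simp [Matrix.mulVecLin_apply]
    have : (fun i => amg f (χ.val.mulVec w i))
        = ∑ l, fun i => amg f (χ.val.mulVec (Pi.single l (w l)) i) := by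
      funext i
      rw [hw]
      simp [Finset.sum_apply, map_sum, mul_comm]
    rw [this]
    exact Submodule.sum_mem _ fun l _ => key l (w l) f
  -- W spans over A
  have hStop : ∀ v : Fin n → A, v ∈ S := by
    intro v
    have h := master ((χ⁻¹).val.mulVec fun i => (1 : A) ⊗ₜ[k] v i) f₀
    have hmv : χ.val.mulVec ((χ⁻¹).val.mulVec fun i => (1 : A) ⊗ₜ[k] v i)
        = fun i => (1 : A) ⊗ₜ[k] v i := by
      rw [Matrix.mulVec_mulVec]
      have : χ.val * (χ⁻¹).val = 1 := by
        rw [← Units.val_mul, mul_inv_cancel, Units.val_one]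
      rw [this, Matrix.one_mulVec]
    rw [hmv] at h
    have : (fun i => amg (k := k) f₀ ((1 : A) ⊗ₜ[k] v i)) = v := by
      funext i
      simp [hf₀1]
    rwa [this] at h
  -- extract a finite spanning subset of W
  have hfin : ∀ j : Fin n, ∃ t : Finset (Fin n → A), ↑t ⊆ (W : Set (Fin n → A)) ∧
      (Pi.single j 1 : Fin n → A) ∈ Submodule.span A (t : Set (Fin n → A)) := by
    intro j
    exact Submodule.mem_span_finite_of_mem_span (hStop _)
  choose t ht hts using hfin
  set T : Finset (Fin n → A) := Finset.univ.biUnion t with hT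
  have hTW : (T : Set (Fin n → A)) ⊆ (W : Set (Fin n → A)) := by
    intro x hx
    simp only [hT, Finset.coe_biUnion, Set.mem_iUnion] at hx
    obtain ⟨j, _, hj⟩ := hx
    exact ht j hj
  have hTspan : Submodule.span A (T : Set (Fin n → A)) = ⊤ := by
    rw [eq_top_iff, ← Module.Basis.span_eq (Pi.basisFun A (Fin n)), Submodule.span_le]
    rintro x ⟨j, rfl⟩
    rw [Pi.basisFun_apply]
    refine Submodule.span_mono ?_ (hts j)
    intro y hy
    simp only [hT, Finset.coe_biUnion, Set.mem_iUnion]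
    exact ⟨j, Finset.mem_univ j, hy⟩
  -- finite dimensional k-span
  set W0 : Submodule k (Fin n → A) := Submodule.span k (T : Set (Fin n → A)) with hW0
  have hW0W : W0 ≤ W := Submodule.span_le.mpr hTW
  have : FiniteDimensional k W0 := FiniteDimensional.span_of_finite k T.finite_toSet
  set r := Module.finrank k W0 with hr
  set b : Module.Basis (Fin r) k W0 := Module.finBasis k W0 with hb
  set u : Fin r → (Fin n → A) := fun i => (b i : Fin n → A) with hu
  have huW : ∀ i, u i ∈ W := fun i => hW0W (b i).2
  -- k-linear independence of u
  have hindk : LinearIndependent k u := by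
    have := b.linearIndependent
    exact this.map' W0.subtype (Submodule.ker_subtype W0)
  -- A-linear independence of u
  have hindA : LinearIndependent A u := by
    rw [Fintype.linearIndependent_iff]
    intro c hc
    -- coordinates
    have hcoord : ∀ j, ∑ i, c i * u i j = 0 := by
      intro j
      have := congrFun hc j
      simpa [Finset.sum_apply] using this
    set z : Fin n → A ⊗[k] A := fun l => ∑ i, δ2 (u i l) * δ1 (c i) with hz
    have hzz : χ.val.mulVec z = 0 := by
      funext j
      rw [Matrix.mulVec]
      simp only [dotProduct, hz]
      calc ∑ l, χ.val j l * ∑ i, δ2 (u i l) * δ1 (c i)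
          = ∑ l, ∑ i, χ.val j l * (δ2 (u i l) * δ1 (c i)) := by
            exact Finset.sum_congr rfl fun l _ => Finset.mul_sum _ _ _
        _ = ∑ i, ∑ l, χ.val j l * (δ2 (u i l) * δ1 (c i)) := Finset.sum_comm
        _ = ∑ i, (∑ l, χ.val j l * δ2 (u i l)) * δ1 (c i) := by
            refine Finset.sum_congr rfl fun i _ => ?_
            rw [Finset.sum_mul]
            exact Finset.sum_congr rfl fun l _ => by ring
        _ = ∑ i, δ1 (u i j) * δ1 (c i) := by
            refine Finset.sum_congr rfl fun i _ => ?_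
            rw [(memW _).mp (huW i) j]
        _ = δ1 (∑ i, c i * u i j) := by
            rw [map_sum]
            refine Finset.sum_congr rfl fun i _ => ?_
            rw [← _root_.map_mul, mul_comm]
        _ = 0 := by rw [hcoord j, map_zero]
    have hz0 : z = 0 := by
      have h1 : (χ⁻¹).val.mulVec (χ.val.mulVec z) = z := by
        rw [Matrix.mulVec_mulVec]
        have : (χ⁻¹).val * χ.val = 1 := by
          rw [← Units.val_mul, inv_mul_cancel, Units.val_one]
        rw [this, Matrix.one_mulVec]
      rw [hzz, Matrix.mulVec_zero] at h1
      exact h1.symm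
    -- apply dual functionals
    have hψ : ∀ (ψ : A →ₗ[k] k) (i : Fin r), ψ (c i) = 0 := by
      intro ψ i
      have hl : ∀ l, ∑ i', ψ (c i') • u i' l = 0 := by
        intro l
        have h1 := congrFun hz0 l
        have h2 := congrArg (amg' (k := k) ψ) h1
        rw [map_sum] at h2
        simpa [hδ1, hδ2, amitsurD1, amitsurD2, Algebra.TensorProduct.tmul_mul_tmul] using h2
      have hsum : ∑ i', ψ (c i') • u i' = 0 := by
        funext l
        simpa [Finset.sum_apply] using hl l
      exact Fintype.linearIndependent_iff.mp hindk (fun i' => ψ (c i')) hsum i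
    intro i
    rw [← Module.forall_dual_apply_eq_zero_iff k (c i)]
    intro ψ
    exact hψ ψ i
  -- span over A of u
  have hspanu : ⊤ ≤ Submodule.span A (Set.range u) := by
    rw [← hTspan]
    rw [Submodule.span_le]
    intro x hx
    have hxW0 : x ∈ W0 := Submodule.subset_span hx
    have hrep : ((⟨x, hxW0⟩ : W0) : Fin n → A) = ∑ i, b.repr ⟨x, hxW0⟩ i • u i := by
      conv_lhs => rw [← b.sum_repr ⟨x, hxW0⟩]
      push_cast
      rfl
    have : x = ∑ i, b.repr ⟨x, hxW0⟩ i • u i := hrep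
    rw [this]
    refine Submodule.sum_mem _ fun i _ => ?_
    exact Submodule.smul_of_tower_mem _ _ (Submodule.subset_span ⟨i, rfl⟩)
  set bA : Module.Basis (Fin r) A (Fin n → A) := Module.Basis.mk hindA hspanu with hbA
  -- r = n
  set eq : Fin r ≃ Fin n := Module.Basis.indexEquiv bA (Pi.basisFun A (Fin n)) with heqq
  set bA' : Module.Basis (Fin n) A (Fin n → A) := bA.reindex eq with hbA'
  -- the matrix α
  set M : Matrix (Fin n) (Fin n) A := (Pi.basisFun A (Fin n)).toMatrix ⇑bA' with hM
  have hMentry : ∀ i j, M i j = bA' j i := by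
    intro i j
    rw [hM, Module.Basis.toMatrix_apply, Pi.basisFun_repr]
  have hcolW : ∀ j, (fun i => M i j) ∈ W := by
    intro j
    have : (fun i => M i j) = bA' j := by funext i; exact hMentry i j
    rw [this, hbA', Module.Basis.reindex_apply, hbA, Module.Basis.mk_apply]
    exact huW _
  have : Invertible M := Module.Basis.invertibleToMatrix (Pi.basisFun A (Fin n)) bA'
  set αu : (Matrix (Fin n) (Fin n) A)ˣ := unitOfInvertible M with hαu
  -- the key matrix identity
  have hkey : χ.val * M.map ⇑δ2 = M.map ⇑δ1 := by
    ext i j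
    rw [Matrix.mul_apply, Matrix.map_apply]
    have := (memW _).mp (hcolW j) i
    simpa [Matrix.map_apply] using this
  -- units
  set U1 := Units.map ((amitsurD1 k A).toRingHom.mapMatrix.toMonoidHom) αu with hU1
  set U2 := Units.map ((amitsurD2 k A).toRingHom.mapMatrix.toMonoidHom) αu with hU2
  have hU1val : (U1 : Matrix (Fin n) (Fin n) (A ⊗[k] A)) = M.map ⇑δ1 := by
    rw [hU1]
    simp [RingHom.mapMatrix_apply, hδ1, hαu]
  have hU2val : (U2 : Matrix (Fin n) (Fin n) (A ⊗[k] A)) = M.map ⇑δ2 := by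
    rw [hU2]
    simp [RingHom.mapMatrix_apply, hδ2, hαu]
  have hχU : χ = U1 * U2⁻¹ := by
    rw [eq_mul_inv_iff_mul_eq]
    ext : 1
    rw [Units.val_mul, hU1val, hU2val]
    exact hkey
  -- the sigma part
  have hτd1 : ∀ (m : ℕ) (x : A), (τ ^ m) (δ1 x) = δ1 ((σA ^ m) x) := by
    intro m
    induction m with
    | zero => intro x; simp
    | succ m ih =>
        intro x
        have h1 : τ (δ1 x) = δ1 (σA x) := by
          simp [hδ1, amitsurD1, hτ]
        rw [pow_succ, RingHom.mul_def, RingHom.comp_apply, h1, ih, pow_succ σA m,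
          RingHom.mul_def, RingHom.comp_apply]
  have hτd2 : ∀ (m : ℕ) (x : A), (τ ^ m) (δ2 x) = δ2 ((σA ^ m) x) := by
    intro m
    induction m with
    | zero => intro x; simp
    | succ m ih =>
        intro x
        have h1 : τ (δ2 x) = δ2 (σA x) := by
          simp [hδ2, amitsurD2, hτ]
        rw [pow_succ, RingHom.mul_def, RingHom.comp_apply, h1, ih, pow_succ σA m,
          RingHom.mul_def, RingHom.comp_apply]
  set αd : (Matrix (Fin n) (Fin n) A)ˣ :=
    Units.map ((σA ^ d).mapMatrix).toMonoidHom αu with hαd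
  have hαdval : (αd : Matrix (Fin n) (Fin n) A) = αu.val.map ⇑(σA ^ d) := by
    rw [hαd]
    simp [RingHom.mapMatrix_apply]
  set V1 := Units.map ((amitsurD1 k A).toRingHom.mapMatrix.toMonoidHom) αd with hV1
  set V2 := Units.map ((amitsurD2 k A).toRingHom.mapMatrix.toMonoidHom) αd with hV2
  have hTχ : Units.map ((τ ^ d).mapMatrix).toMonoidHom χ = χ := by
    ext : 1
    simpa [RingHom.mapMatrix_apply] using hτχ
  have hTU1 : Units.map ((τ ^ d).mapMatrix).toMonoidHom U1 = V1 := by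
    ext : 1
    rw [hV1]
    simp only [Units.coe_map, RingHom.toMonoidHom_eq_coe, MonoidHom.coe_coe,
      RingHom.mapMatrix_apply, hU1val, hαdval]
    ext i j
    simp only [Matrix.map_apply]
    rw [hτd1 d (M i j)]
    rfl
  have hTU2 : Units.map ((τ ^ d).mapMatrix).toMonoidHom U2 = V2 := by
    ext : 1
    rw [hV2]
    simp only [Units.coe_map, RingHom.toMonoidHom_eq_coe, MonoidHom.coe_coe,
      RingHom.mapMatrix_apply, hU2val, hαdval]
    ext i j
    simp only [Matrix.map_apply]
    rw [hτd2 d (M i j)]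
    rfl
  have hmain : U1 * U2⁻¹ = V1 * V2⁻¹ := by
    calc U1 * U2⁻¹ = χ := hχU.symm
      _ = Units.map ((τ ^ d).mapMatrix).toMonoidHom χ := hTχ.symm
      _ = Units.map ((τ ^ d).mapMatrix).toMonoidHom (U1 * U2⁻¹) := by rw [← hχU]
      _ = V1 * V2⁻¹ := by rw [_root_.map_mul, _root_.map_inv, hTU1, hTU2]
  have hswap : U1⁻¹ * V1 = U2⁻¹ * V2 := by
    have h := congrArg (fun x => U1⁻¹ * x * V2) hmain
    simpa [mul_assoc] using h.symm
  set βu : (Matrix (Fin n) (Fin n) A)ˣ := αu⁻¹ * αd with hβu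
  have hb1 : Units.map ((amitsurD1 k A).toRingHom.mapMatrix.toMonoidHom) βu = U1⁻¹ * V1 := by
    rw [hβu, _root_.map_mul, _root_.map_inv, hU1, hV1]
  have hb2 : Units.map ((amitsurD2 k A).toRingHom.mapMatrix.toMonoidHom) βu = U2⁻¹ * V2 := by
    rw [hβu, _root_.map_mul, _root_.map_inv, hU2, hV2]
  have hβeq : (βu.val).map ⇑δ1 = (βu.val).map ⇑δ2 := by
    have h : Units.map ((amitsurD1 k A).toRingHom.mapMatrix.toMonoidHom) βu
        = Units.map ((amitsurD2 k A).toRingHom.mapMatrix.toMonoidHom) βu := by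
      rw [hb1, hb2, hswap]
    have h2 := congrArg Units.val h
    simpa [RingHom.mapMatrix_apply, hδ1, hδ2] using h2
  have hβent : ∀ i j, βu.val i j = algebraMap k A (f₀ (βu.val i j)) := by
    intro i j
    apply heq
    have h := congrFun (congrFun hβeq i) j
    simpa [Matrix.map_apply, hδ1, hδ2, amitsurD1, amitsurD2] using h
  set bmat : Matrix (Fin n) (Fin n) k := fun i j => f₀ (βu.val i j) with hbmat
  have hβval : βu.val = bmat.map (algebraMap k A) := by
    ext i j
    rw [Matrix.map_apply]
    exact hβent i j
  have hdet : IsUnit ((algebraMap k A) bmat.det) := by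
    rw [RingHom.map_det]
    have h : (algebraMap k A).mapMatrix bmat = βu.val := by
      rw [RingHom.mapMatrix_apply, ← hβval]
    rw [h]
    exact (Matrix.isUnit_iff_isUnit_det _).mp βu.isUnit
  have hdetne : bmat.det ≠ 0 := by
    intro h0
    rw [h0, map_zero] at hdet
    exact not_isUnit_zero hdet
  have hbunit : IsUnit bmat := (Matrix.isUnit_iff_isUnit_det _).mpr (isUnit_iff_ne_zero.mpr hdetne)
  refine ⟨αu, hbunit.unit, hχU, ?_⟩
  calc αu.val.map ⇑(σA ^ d) = αd.val := hαdval.symm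
    _ = (αu * βu).val := by rw [hβu, mul_inv_cancel_left]
    _ = αu.val * βu.val := Units.val_mul _ _
    _ = αu.val * ((hbunit.unit).val.map (algebraMap k A)) := by
        rw [IsUnit.unit_spec, ← hβval]
end
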